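/- Consider the weighted regularized quantile regression problem: minimize over functions t : 𝒳 → ℝ the objective ∑_{i=1}^n w_i ℓ_α(t(x_i), s_i) + R(t), where w_i ≥ 0 sum to 1 and R is convex. Its Lagrangian dual is: maximize (w ⊙ λ)ᵀ s − R*(w ⊙ λ) subject to −α·1 ⪯ λ ⪯ (1−α)·1, where R*(a) = sup_t {∑_i a_i t(x_i) − R(t)} is the Fenchel conjugate of R along the evaluation functionals and ⊙ denotes the Hadamard product. -/

import Mathlib

/-- Key EReal fact: `⨅ (a - g i) = a - ⨆ g i` for a real constant `a` and real-valued `g`. -/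
lemma ereal_iInf_sub {ι : Type*} [Nonempty ι] (a : ℝ) (g : ι → ℝ) :
    (⨅ i, ((a - g i : ℝ) : EReal)) = (a : EReal) - ⨆ i, ((g i : ℝ) : EReal) := by
  set S : EReal := ⨆ i, ((g i : ℝ) : EReal) with hS
  by_cases htop : S = ⊤
  · rw [htop, EReal.sub_top, EReal.eq_bot_iff_forall_lt]
    intro y
    have h1 : ((a - y : ℝ) : EReal) < S := htop ▸ EReal.coe_lt_top _
    rw [hS, lt_iSup_iff] at h1
    obtain ⟨i, hi⟩ := h1
    refine lt_of_le_of_lt (iInf_le _ i) ?_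
    rw [EReal.coe_lt_coe_iff] at hi ⊢
    linarith
  · have hbot : S ≠ ⊥ := by
      intro h
      have := le_iSup (fun i => ((g i : ℝ) : EReal)) (Classical.arbitrary ι)
      rw [← hS, h, le_bot_iff] at this
      exact EReal.coe_ne_bot _ this
    set b : ℝ := S.toReal with hb
    have hSb : S = (b : EReal) := (EReal.coe_toReal htop hbot).symm
    have hle : ∀ i, g i ≤ b := by
      intro i
      have : ((g i : ℝ) : EReal) ≤ S := le_iSup (fun i => ((g i : ℝ) : EReal)) i
      rw [hSb, EReal.coe_le_coe_iff] at this
      exact this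
    rw [hSb, ← EReal.coe_sub]
    refine le_antisymm ?_ (le_iInf fun i => by
      rw [EReal.coe_le_coe_iff]; have := hle i; linarith)
    by_contra hcon
    push_neg at hcon
    obtain ⟨c, hc1, hc2⟩ := EReal.lt_iff_exists_real_btwn.1 hcon
    have hgc : ∀ i, g i ≤ a - c := by
      intro i
      have : ((c : ℝ) : EReal) ≤ ((a - g i : ℝ) : EReal) := le_of_lt (lt_of_lt_of_le hc2 (iInf_le _ i))
      rw [EReal.coe_le_coe_iff] at this
      linarith
    have : S ≤ ((a - c : ℝ) : EReal) := by
      rw [hS]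
      exact iSup_le fun i => EReal.coe_le_coe_iff.2 (hgc i)
    rw [hSb, EReal.coe_le_coe_iff] at this
    rw [EReal.coe_lt_coe_iff] at hc1
    linarith

/-- The pinball (quantile) loss at level `α`. -/
noncomputable def pinball (α t s : ℝ) : ℝ := α * max (t - s) 0 + (1 - α) * max (s - t) 0

/-- The Lagrangian dual function of the weighted regularized quantile regression problem
`minimize ∑ᵢ wᵢ ℓ_α(t(xᵢ), sᵢ) + R(t)`, obtained from the slack reformulation with
`pᵢ = [sᵢ − t(xᵢ)]₊ ≥ 0`, `qᵢ = [t(xᵢ) − sᵢ]₊ ≥ 0` and multipliers `wᵢλᵢ` on the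
equality constraints `sᵢ − t(xᵢ) − pᵢ + qᵢ = 0`. -/
noncomputable def lagrangianDual {𝒳 : Type*} (n : ℕ) (x : Fin n → 𝒳) (s : Fin n → ℝ)
    (w : Fin n → ℝ) (α : ℝ) (R : (𝒳 → ℝ) → ℝ) (lam : Fin n → ℝ) : EReal :=
  ⨅ (t : 𝒳 → ℝ) (p : Fin n → ℝ) (q : Fin n → ℝ)
      (_ : ∀ i, 0 ≤ p i) (_ : ∀ i, 0 ≤ q i),
    ((∑ i, w i * ((1 - α) * p i + α * q i) + R t
        + ∑ i, w i * lam i * (s i - t (x i) - p i + q i) : ℝ) : EReal)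

/-- The Lagrangian dual of the weighted regularized quantile regression problem is
`maximize (w ⊙ λ)ᵀ s − R*(w ⊙ λ)` subject to `−α·1 ⪯ λ ⪯ (1−α)·1`: on the box the dual
function equals `(w ⊙ λ)ᵀ s − R*(w ⊙ λ)` where `R*` is the Fenchel conjugate of `R`
along the evaluation functionals, and outside the box (at a coordinate with positive
weight) the dual function is `−∞`. -/
theorem weighted_quantile_regression_dual
    {𝒳 : Type*} (n : ℕ) (x : Fin n → 𝒳) (s : Fin n → ℝ)
    (w : Fin n → ℝ) (hw : ∀ i, 0 ≤ w i) (hwsum : ∑ i, w i = 1)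
    (α : ℝ) (hα : α ∈ Set.Ioo (0 : ℝ) 1)
    (R : (𝒳 → ℝ) → ℝ) (hR : ConvexOn ℝ Set.univ R)
    (Rstar : (Fin n → ℝ) → EReal)
    (hRstar : ∀ a : Fin n → ℝ,
      Rstar a = ⨆ t : 𝒳 → ℝ, ((∑ i, a i * t (x i) - R t : ℝ) : EReal)) :
    ∀ lam : Fin n → ℝ,
      ((∀ i, -α ≤ lam i ∧ lam i ≤ 1 - α) →
        lagrangianDual n x s w α R lam
          = ((∑ i, w i * lam i * s i : ℝ) : EReal) - Rstar (fun i => w i * lam i)) ∧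
      ((∃ i, 0 < w i ∧ (lam i < -α ∨ 1 - α < lam i)) →
        lagrangianDual n x s w α R lam = ⊥) := by
  intro lam
  obtain ⟨hα0, hα1⟩ := hα
  set A : ℝ := ∑ i, w i * lam i * s i with hA
  set T : (𝒳 → ℝ) → ℝ := fun t => ∑ i, w i * lam i * t (x i) with hT
  set P : (Fin n → ℝ) → ℝ := fun p => ∑ i, w i * ((1 - α) - lam i) * p i with hP
  set Q : (Fin n → ℝ) → ℝ := fun q => ∑ i, w i * (α + lam i) * q i with hQ
  have key : ∀ (t : 𝒳 → ℝ) (p q : Fin n → ℝ),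
      (∑ i, w i * ((1 - α) * p i + α * q i) + R t
        + ∑ i, w i * lam i * (s i - t (x i) - p i + q i))
      = A + (R t - T t) + P p + Q q := by
    intro t p q
    have hi : ∀ i, w i * ((1 - α) * p i + α * q i) + w i * lam i * (s i - t (x i) - p i + q i)
        = w i * lam i * s i - w i * lam i * t (x i) + w i * ((1 - α) - lam i) * p i
          + w i * (α + lam i) * q i := fun i => by ring
    simp only [hA, hT, hP, hQ]
    rw [add_right_comm, ← Finset.sum_add_distrib, Finset.sum_congr rfl fun i _ => hi i]
    simp only [Finset.sum_add_distrib, Finset.sum_sub_distrib]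
    ring
  have hdual : lagrangianDual n x s w α R lam
      = ⨅ (t : 𝒳 → ℝ) (p : Fin n → ℝ) (q : Fin n → ℝ)
          (_ : ∀ i, 0 ≤ p i) (_ : ∀ i, 0 ≤ q i),
        ((A + (R t - T t) + P p + Q q : ℝ) : EReal) := by
    unfold lagrangianDual
    exact iInf_congr fun t => iInf_congr fun p => iInf_congr fun q =>
      iInf_congr fun _ => iInf_congr fun _ => by rw [key]
  constructor
  · -- box case
    intro hbox
    have hPnn : ∀ p : Fin n → ℝ, (∀ i, 0 ≤ p i) → 0 ≤ P p := by
      intro p hp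
      exact Finset.sum_nonneg fun i _ => mul_nonneg
        (mul_nonneg (hw i) (by linarith [(hbox i).2])) (hp i)
    have hQnn : ∀ q : Fin n → ℝ, (∀ i, 0 ≤ q i) → 0 ≤ Q q := by
      intro q hq
      exact Finset.sum_nonneg fun i _ => mul_nonneg
        (mul_nonneg (hw i) (by linarith [(hbox i).1])) (hq i)
    have hinner : ∀ t : 𝒳 → ℝ,
        (⨅ (p : Fin n → ℝ) (q : Fin n → ℝ)
            (_ : ∀ i, 0 ≤ p i) (_ : ∀ i, 0 ≤ q i),
          ((A + (R t - T t) + P p + Q q : ℝ) : EReal))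
        = ((A - (T t - R t) : ℝ) : EReal) := by
      intro t
      apply le_antisymm
      · refine le_trans (iInf_le _ (fun _ => 0)) ?_
        refine le_trans (iInf_le _ (fun _ => 0)) ?_
        refine le_trans (iInf_le _ (fun _ => le_refl 0)) ?_
        refine le_trans (iInf_le _ (fun _ => le_refl 0)) ?_
        apply le_of_eq
        have hP0 : P (fun _ => 0) = 0 := by simp [hP]
        have hQ0 : Q (fun _ => 0) = 0 := by simp [hQ]
        rw [hP0, hQ0]
        norm_cast
        ring
      · refine le_iInf fun p => le_iInf fun q => le_iInf fun hp => le_iInf fun hq => ?_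
        rw [EReal.coe_le_coe_iff]
        have h1 := hPnn p hp
        have h2 := hQnn q hq
        linarith
    rw [hdual, iInf_congr hinner, ereal_iInf_sub A (fun t => T t - R t), hRstar]
  · -- unbounded case
    intro ⟨j, hwj, hj⟩
    rw [hdual, EReal.eq_bot_iff_forall_lt]
    intro y
    set t0 : 𝒳 → ℝ := fun _ => 0 with ht0
    have hT0 : T t0 = 0 := by simp [hT, ht0]
    -- coefficient that is negative
    rcases hj with hj | hj
    · -- lam j < -α : coefficient of q j is w j * (α + lam j) < 0
      set c : ℝ := w j * (α + lam j) with hc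
      have hcneg : c < 0 := mul_neg_of_pos_of_neg hwj (by linarith)
      set M : ℝ := max 0 ((A + R t0 - (y - 1)) / (-c)) with hM
      have hM0 : 0 ≤ M := le_max_left _ _
      set q0 : Fin n → ℝ := fun i => if i = j then M else 0 with hq0
      have hq0nn : ∀ i, 0 ≤ q0 i := by
        intro i; simp only [hq0]; split <;> simp [hM0]
      have hQq0 : Q q0 = c * M := by
        simp only [hQ, hq0, mul_ite, mul_zero]
        rw [Finset.sum_ite_eq' Finset.univ j (fun i => w i * (α + lam i) * M)]
        simp [hc]
      have hval : A + (R t0 - T t0) + P (fun _ => 0) + Q q0 ≤ y - 1 := by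
        have hcM : c * M ≤ -(A + R t0 - (y - 1)) := by
          have h1 : (A + R t0 - (y - 1)) / (-c) ≤ M := le_max_right _ _
          have h2 : c * M ≤ c * ((A + R t0 - (y - 1)) / (-c)) :=
            mul_le_mul_of_nonpos_left h1 (le_of_lt hcneg)
          have h3 : c * ((A + R t0 - (y - 1)) / (-c)) = -(A + R t0 - (y - 1)) := by
            rw [div_neg, mul_neg, ← mul_div_assoc, mul_div_cancel_left₀ _ hcneg.ne]
          linarith
        have hP0 : P (fun _ => 0) = 0 := by simp [hP]
        rw [hQq0, hP0, hT0]
        linarith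
      refine lt_of_le_of_lt (iInf_le _ t0) ?_
      refine lt_of_le_of_lt (iInf_le _ (fun _ => 0)) ?_
      refine lt_of_le_of_lt (iInf_le _ q0) ?_
      refine lt_of_le_of_lt (iInf_le _ (fun _ => le_refl 0)) ?_
      refine lt_of_le_of_lt (iInf_le _ hq0nn) ?_
      rw [EReal.coe_lt_coe_iff]
      linarith
    · -- 1 - α < lam j : coefficient of p j is w j * ((1-α) - lam j) < 0
      set c : ℝ := w j * ((1 - α) - lam j) with hc
      have hcneg : c < 0 := mul_neg_of_pos_of_neg hwj (by linarith)
      set M : ℝ := max 0 ((A + R t0 - (y - 1)) / (-c)) with hM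
      have hM0 : 0 ≤ M := le_max_left _ _
      set p0 : Fin n → ℝ := fun i => if i = j then M else 0 with hp0
      have hp0nn : ∀ i, 0 ≤ p0 i := by
        intro i; simp only [hp0]; split <;> simp [hM0]
      have hPp0 : P p0 = c * M := by
        simp only [hP, hp0, mul_ite, mul_zero]
        rw [Finset.sum_ite_eq' Finset.univ j (fun i => w i * ((1 - α) - lam i) * M)]
        simp [hc]
      have hval : A + (R t0 - T t0) + P p0 + Q (fun _ => 0) ≤ y - 1 := by
        have hcM : c * M ≤ -(A + R t0 - (y - 1)) := by
          have h1 : (A + R t0 - (y - 1)) / (-c) ≤ M := le_max_right _ _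
          have h2 : c * M ≤ c * ((A + R t0 - (y - 1)) / (-c)) :=
            mul_le_mul_of_nonpos_left h1 (le_of_lt hcneg)
          have h3 : c * ((A + R t0 - (y - 1)) / (-c)) = -(A + R t0 - (y - 1)) := by
            rw [div_neg, mul_neg, ← mul_div_assoc, mul_div_cancel_left₀ _ hcneg.ne]
          linarith
        have hQ0 : Q (fun _ => 0) = 0 := by simp [hQ]
        rw [hPp0, hQ0, hT0]
        linarith
      refine lt_of_le_of_lt (iInf_le _ t0) ?_
      refine lt_of_le_of_lt (iInf_le _ p0) ?_
      refine lt_of_le_of_lt (iInf_le _ (fun _ => 0)) ?_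
      refine lt_of_le_of_lt (iInf_le _ hp0nn) ?_
      refine lt_of_le_of_lt (iInf_le _ (fun _ => le_refl 0)) ?_
      rw [EReal.coe_lt_coe_iff]
      linarith
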